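/- Let f : [0,1] → ℂ be a finite linear combination of indicator functions of intervals of the form [a/Q, (a+1)/Q) with integer a, 0 ≤ a < Q. Then for all integers k, ℓ with ℓ ≠ 0 and k + Qℓ ≠ 0, f̂(k + Qℓ) = (k/(k + Qℓ)) · f̂(k), where f̂(n) = ∫₀¹ f(x) e^{-2πi n x} dx. -/

import Mathlib

open scoped Real

/-- The `n`-th Fourier coefficient (on `ℝ/ℤ`) of a function on `[0,1]`. -/
noncomputable def fourierCoef01 (g : ℝ → ℂ) (n : ℤ) : ℂ :=
  ∫ x in (0 : ℝ)..1, g x * Complex.exp (-2 * π * Complex.I * n * x)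

open MeasureTheory in
lemma key_integral (s t : ℝ) (hs : 0 ≤ s) (hst : s ≤ t) (ht : t ≤ 1) {c : ℂ} (hc : c ≠ 0) :
    (∫ x in (0 : ℝ)..1, (Set.Ico s t).indicator 1 x * Complex.exp (c * x))
      = (Complex.exp (c * t) - Complex.exp (c * s)) / c := by
  have hpt : ∀ x : ℝ, (Set.Ico s t).indicator 1 x * Complex.exp (c * x)
      = (Set.Ico s t).indicator (fun x : ℝ => Complex.exp (c * x)) x := by
    intro x
    by_cases hx : x ∈ Set.Ico s t <;>
      simp [Set.indicator_of_mem, Set.indicator_of_notMem, hx]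
  simp only [hpt]
  rw [intervalIntegral.integral_of_le zero_le_one,
    MeasureTheory.integral_indicator measurableSet_Ico,
    MeasureTheory.Measure.restrict_restrict measurableSet_Ico]
  have hae : (Set.Ico s t ∩ Set.Ioc 0 1 : Set ℝ) =ᵐ[volume] Set.Ioc s t := by
    have h1 : (Set.Ico s t ∩ Set.Ioc 0 1 : Set ℝ) =ᵐ[volume]
        (Set.Ioc s t ∩ Set.Ioc 0 1 : Set ℝ) :=
      MeasureTheory.ae_eq_set_inter Ico_ae_eq_Ioc (MeasureTheory.ae_eq_refl _)
    have h2 : (Set.Ioc s t ∩ Set.Ioc 0 1 : Set ℝ) = Set.Ioc s t := by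
      apply Set.inter_eq_left.mpr
      intro x hx
      exact ⟨lt_of_le_of_lt hs hx.1, le_trans hx.2 ht⟩
    rw [← h2]; exact h1
  rw [MeasureTheory.setIntegral_congr_set hae,
    ← intervalIntegral.integral_of_le hst, integral_exp_mul_complex hc]

lemma indicator_mul_intervalIntegrable (s t : ℝ) (b c : ℂ) :
    IntervalIntegrable
      (fun x : ℝ => b * (Set.Ico s t).indicator 1 x * Complex.exp (c * x))
      MeasureTheory.volume 0 1 := by
  have hpt : (fun x : ℝ => b * (Set.Ico s t).indicator 1 x * Complex.exp (c * x))
      = (Set.Ico s t).indicator (fun x : ℝ => b * Complex.exp (c * x)) := by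
    funext x
    by_cases hx : x ∈ Set.Ico s t <;>
      simp [Set.indicator_of_mem, Set.indicator_of_notMem, hx]
  rw [hpt, intervalIntegrable_iff]
  have hcont : Continuous fun x : ℝ => b * Complex.exp (c * x) := by
    fun_prop
  exact (hcont.integrableOn_uIoc (a := 0) (b := 1)).indicator measurableSet_Ico

lemma fourier_expand (Q : ℕ) (hQ : 1 ≤ Q) (c : ℕ → ℂ) (f : ℝ → ℂ)
    (hf : ∀ x, f x = ∑ a ∈ Finset.range Q,
      c a * (Set.Ico ((a : ℝ) / Q) ((a + 1 : ℝ) / Q)).indicator 1 x)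
    (n : ℤ) (hn : n ≠ 0) :
    fourierCoef01 f n = ∑ a ∈ Finset.range Q,
      c a * ((Complex.exp ((-2 * π * Complex.I * n) * ((((a : ℝ) + 1) / Q : ℝ) : ℂ))
        - Complex.exp ((-2 * π * Complex.I * n) * (((a : ℝ) / Q : ℝ) : ℂ)))
          / (-2 * π * Complex.I * n)) := by
  have hQ0 : (0 : ℝ) < Q := by exact_mod_cast hQ
  have hcn : (-2 * (π : ℂ) * Complex.I * n : ℂ) ≠ 0 := by
    have hπ : (π : ℂ) ≠ 0 := Complex.ofReal_ne_zero.mpr Real.pi_ne_zero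
    have hn' : (n : ℂ) ≠ 0 := Int.cast_ne_zero.mpr hn
    simp [Complex.I_ne_zero, hπ, hn']
  unfold fourierCoef01
  have heq : (fun x : ℝ => f x * Complex.exp (-2 * π * Complex.I * n * x))
      = fun x : ℝ => ∑ a ∈ Finset.range Q,
        c a * ((Set.Ico ((a : ℝ) / Q) ((a + 1 : ℝ) / Q)).indicator 1 x
          * Complex.exp ((-2 * π * Complex.I * n : ℂ) * x)) := by
    funext x
    rw [hf x, Finset.sum_mul]
    exact Finset.sum_congr rfl fun a _ => by ring
  rw [heq, intervalIntegral.integral_finset_sum]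
  · apply Finset.sum_congr rfl
    intro a ha
    have ha' : (a : ℝ) + 1 ≤ Q := by
      have := Finset.mem_range.mp ha
      exact_mod_cast this
    rw [intervalIntegral.integral_const_mul,
      key_integral ((a : ℝ) / Q) (((a : ℝ) + 1) / Q)
        (by positivity)
        (by gcongr; linarith)
        ((div_le_one hQ0).mpr ha') hcn]
  · intro a _
    have := indicator_mul_intervalIntegrable ((a : ℝ) / Q) (((a : ℝ) + 1) / Q)
      (c a) (-2 * π * Complex.I * n)
    apply this.congr
    intro x _
    ring

lemma exp_add_int_two_pi (z : ℂ) (m : ℤ) :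
    Complex.exp (z + m * (2 * π * Complex.I)) = Complex.exp z := by
  rw [Complex.exp_add, Complex.exp_int_mul_two_pi_mul_I, mul_one]

/-- If `f` is a finite linear combination of indicators of `Q`-adic intervals
`[a/Q, (a+1)/Q)`, then `f̂(k + Qℓ) = (k/(k+Qℓ)) f̂(k)`. -/
theorem fourierCoef_step_function_shift
    (Q : ℕ) (hQ : 1 ≤ Q) (c : ℕ → ℂ) (f : ℝ → ℂ)
    (hf : ∀ x, f x = ∑ a ∈ Finset.range Q,
      c a * (Set.Ico ((a : ℝ) / Q) ((a + 1 : ℝ) / Q)).indicator 1 x)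
    (k ℓ : ℤ) (hℓ : ℓ ≠ 0) (hkl : k + (Q : ℤ) * ℓ ≠ 0) :
    fourierCoef01 f (k + (Q : ℤ) * ℓ)
      = ((k : ℂ) / ((k : ℂ) + (Q : ℂ) * (ℓ : ℂ))) * fourierCoef01 f k := by
  have hQ0 : ((Q : ℂ)) ≠ 0 := by
    exact_mod_cast Nat.cast_ne_zero.mpr (by omega)
  have hπ : (π : ℂ) ≠ 0 := Complex.ofReal_ne_zero.mpr Real.pi_ne_zero
  -- key exponential shift identity
  have hshift : ∀ (b : ℤ), Complex.exp ((-2 * (π : ℂ) * Complex.I * ((k : ℂ) + Q * ℓ)) * ((b : ℂ) / Q))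
      = Complex.exp ((-2 * (π : ℂ) * Complex.I * (k : ℂ)) * ((b : ℂ) / Q)) := by
    intro b
    have : (-2 * (π : ℂ) * Complex.I * ((k : ℂ) + Q * ℓ)) * ((b : ℂ) / Q)
        = (-2 * (π : ℂ) * Complex.I * (k : ℂ)) * ((b : ℂ) / Q)
          + ((-(ℓ * b) : ℤ) : ℂ) * (2 * π * Complex.I) := by
      push_cast
      field_simp
      ring
    rw [this, exp_add_int_two_pi]
  have hcast : ((k + (Q : ℤ) * ℓ : ℤ) : ℂ) = (k : ℂ) + (Q : ℂ) * (ℓ : ℂ) := by push_cast; ring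
  have hkl' : ((k : ℂ) + (Q : ℂ) * (ℓ : ℂ)) ≠ 0 := by
    rw [← hcast]; exact_mod_cast hkl
  rw [fourier_expand Q hQ c f hf _ hkl]
  rcases eq_or_ne k 0 with rfl | hk
  · -- k = 0 : RHS is 0, and each term on LHS vanishes
    simp only [Int.cast_zero, zero_div, zero_mul]
    apply Finset.sum_eq_zero
    intro a ha
    have h1 : Complex.exp ((-2 * (π : ℂ) * Complex.I * ((0 : ℤ) + (Q : ℤ) * ℓ : ℤ))
        * ((((a : ℝ) + 1) / Q : ℝ) : ℂ))
        = Complex.exp ((-2 * (π : ℂ) * Complex.I * ((0 : ℂ))) * ((((a : ℤ) + 1 : ℤ) : ℂ) / Q)) := by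
      have := hshift ((a : ℤ) + 1)
      push_cast at this ⊢
      convert this using 3 <;> push_cast <;> ring
    have h2 : Complex.exp ((-2 * (π : ℂ) * Complex.I * ((0 : ℤ) + (Q : ℤ) * ℓ : ℤ))
        * (((a : ℝ) / Q : ℝ) : ℂ))
        = Complex.exp ((-2 * (π : ℂ) * Complex.I * ((0 : ℂ))) * (((a : ℤ) : ℂ) / Q)) := by
      have := hshift (a : ℤ)
      push_cast at this ⊢
      convert this using 3 <;> push_cast <;> ring
    push_cast at h1 h2 ⊢
    rw [h1, h2]
    simp
  · -- k ≠ 0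
    rw [fourier_expand Q hQ c f hf _ hk, Finset.mul_sum]
    apply Finset.sum_congr rfl
    intro a ha
    have hk' : (k : ℂ) ≠ 0 := Int.cast_ne_zero.mpr hk
    have h1 : Complex.exp ((-2 * (π : ℂ) * Complex.I * ((k + (Q : ℤ) * ℓ : ℤ) : ℂ))
        * ((((a : ℝ) + 1) / Q : ℝ) : ℂ))
        = Complex.exp ((-2 * (π : ℂ) * Complex.I * (k : ℂ)) * ((((a : ℝ) + 1) / Q : ℝ) : ℂ)) := by
      have := hshift ((a : ℤ) + 1)
      push_cast at this ⊢
      convert this using 3 <;> push_cast <;> ring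
    have h2 : Complex.exp ((-2 * (π : ℂ) * Complex.I * ((k + (Q : ℤ) * ℓ : ℤ) : ℂ))
        * (((a : ℝ) / Q : ℝ) : ℂ))
        = Complex.exp ((-2 * (π : ℂ) * Complex.I * (k : ℂ)) * (((a : ℝ) / Q : ℝ) : ℂ)) := by
      have := hshift (a : ℤ)
      push_cast at this ⊢
      convert this using 3 <;> push_cast <;> ring
    push_cast at h1 h2 ⊢
    rw [h1, h2]
    have hI : (Complex.I : ℂ) ≠ 0 := Complex.I_ne_zero
    have key : ∀ X : ℂ, X / (-2 * (π : ℂ) * Complex.I * ((k : ℂ) + (Q : ℂ) * (ℓ : ℂ)))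
        = ((k : ℂ) / ((k : ℂ) + (Q : ℂ) * (ℓ : ℂ))) * (X / (-2 * (π : ℂ) * Complex.I * (k : ℂ))) := by
      intro X
      rw [div_mul_div_comm,
        show (k : ℂ) * X = X * (k : ℂ) from mul_comm _ _,
        show ((k : ℂ) + (Q : ℂ) * (ℓ : ℂ)) * (-2 * (π : ℂ) * Complex.I * (k : ℂ))
          = (-2 * (π : ℂ) * Complex.I * ((k : ℂ) + (Q : ℂ) * (ℓ : ℂ))) * (k : ℂ) from by ring,
        mul_div_mul_right _ _ hk']
    rw [key]
    ring
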